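/- arXiv:0705.3592 — 2 statements merged into one kernel-verified Lean document; each statement's English description precedes it below -/
import Mathlib

section
/- For the metric g = (4x²+y²+1)(dx²+dy²) on ℝ², the function F₁(x,y,ξ₁,ξ₂) = (4x²+y²+1)(y²ξ₁² − (4x²+1)ξ₂²) is a quadratic integral of the geodesic flow: the Hamiltonian Poisson bracket of the corresponding functions on T*ℝ² vanishes. -/
/-- Canonical Poisson bracket of two functions on T*ℝ² with coordinates (x, y, p₁, p₂). -/
noncomputable def pb (F G : ℝ → ℝ → ℝ → ℝ → ℝ) (x y p1 p2 : ℝ) : ℝ :=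
    deriv (fun t => F t y p1 p2) x * deriv (fun t => G x y t p2) p1
  + deriv (fun t => F x t p1 p2) y * deriv (fun t => G x y p1 t) p2
  - deriv (fun t => F x y t p2) p1 * deriv (fun t => G t y p1 p2) x
  - deriv (fun t => F x y p1 t) p2 * deriv (fun t => G x t p1 p2) y

lemma dq (a b c d x : ℝ) (h : c * x ^ 2 + d ≠ 0) :
    deriv (fun t => (a * t ^ 2 + b) / (c * t ^ 2 + d)) x
      = (2 * a * x * (c * x ^ 2 + d) - (a * x ^ 2 + b) * (2 * c * x)) / (c * x ^ 2 + d) ^ 2 := by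
  have hn : HasDerivAt (fun t : ℝ => a * t ^ 2 + b) (2 * a * x) x := by
    have := (((hasDerivAt_pow 2 x).const_mul a).add_const b)
    convert this using 1
    exacts [rfl, rfl, by ring]
  have hd : HasDerivAt (fun t : ℝ => c * t ^ 2 + d) (2 * c * x) x := by
    have := (((hasDerivAt_pow 2 x).const_mul c).add_const d)
    convert this using 1
    exacts [rfl, rfl, by ring]
  have := (hn.div hd h).deriv
  exact this

/-- For g = (4x²+y²+1)(dx²+dy²), F₁ = (y²p₁² − (4x²+1)p₂²)/(4x²+y²+1) is a quadratic
integral of the geodesic flow: it Poisson-commutes with the Hamiltonian. -/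
theorem stmt_4 :
    ∀ x y p1 p2 : ℝ,
      pb (fun x y p1 p2 => (y ^ 2 * p1 ^ 2 - (4 * x ^ 2 + 1) * p2 ^ 2) / (4 * x ^ 2 + y ^ 2 + 1))
         (fun x y p1 p2 => (p1 ^ 2 + p2 ^ 2) / (2 * (4 * x ^ 2 + y ^ 2 + 1)))
         x y p1 p2 = 0 := by
  intro x y p1 p2
  have hD : (4 : ℝ) * x ^ 2 + (y ^ 2 + 1) ≠ 0 := by positivity
  have hDy : (1 : ℝ) * y ^ 2 + (4 * x ^ 2 + 1) ≠ 0 := by positivity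
  have hC : ∀ u : ℝ, (0 : ℝ) * u ^ 2 + (4 * x ^ 2 + y ^ 2 + 1) ≠ 0 := by
    intro u; simp only [zero_mul, zero_add]; positivity
  have hC2 : ∀ u : ℝ, (0 : ℝ) * u ^ 2 + 2 * (4 * x ^ 2 + y ^ 2 + 1) ≠ 0 := by
    intro u; simp only [zero_mul, zero_add]; positivity
  have hGx : (8 : ℝ) * x ^ 2 + 2 * (y ^ 2 + 1) ≠ 0 := by positivity
  have hGy : (2 : ℝ) * y ^ 2 + 2 * (4 * x ^ 2 + 1) ≠ 0 := by positivity
  simp only [pb]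
  have e1 : (fun t : ℝ => (y ^ 2 * p1 ^ 2 - (4 * t ^ 2 + 1) * p2 ^ 2) / (4 * t ^ 2 + y ^ 2 + 1))
      = fun t : ℝ => ((-(4 * p2 ^ 2)) * t ^ 2 + (y ^ 2 * p1 ^ 2 - p2 ^ 2)) / (4 * t ^ 2 + (y ^ 2 + 1)) := by
    funext t; ring_nf
  have e2 : (fun t : ℝ => (t ^ 2 * p1 ^ 2 - (4 * x ^ 2 + 1) * p2 ^ 2) / (4 * x ^ 2 + t ^ 2 + 1))
      = fun t : ℝ => (p1 ^ 2 * t ^ 2 + (-((4 * x ^ 2 + 1) * p2 ^ 2))) / (1 * t ^ 2 + (4 * x ^ 2 + 1)) := by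
    funext t; ring_nf
  have e3 : (fun t : ℝ => (y ^ 2 * t ^ 2 - (4 * x ^ 2 + 1) * p2 ^ 2) / (4 * x ^ 2 + y ^ 2 + 1))
      = fun t : ℝ => (y ^ 2 * t ^ 2 + (-((4 * x ^ 2 + 1) * p2 ^ 2))) / (0 * t ^ 2 + (4 * x ^ 2 + y ^ 2 + 1)) := by
    funext t; ring_nf
  have e4 : (fun t : ℝ => (y ^ 2 * p1 ^ 2 - (4 * x ^ 2 + 1) * t ^ 2) / (4 * x ^ 2 + y ^ 2 + 1))
      = fun t : ℝ => ((-(4 * x ^ 2 + 1)) * t ^ 2 + y ^ 2 * p1 ^ 2) / (0 * t ^ 2 + (4 * x ^ 2 + y ^ 2 + 1)) := by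
    funext t; ring_nf
  have f1 : (fun t : ℝ => (p1 ^ 2 + p2 ^ 2) / (2 * (4 * t ^ 2 + y ^ 2 + 1)))
      = fun t : ℝ => (0 * t ^ 2 + (p1 ^ 2 + p2 ^ 2)) / (8 * t ^ 2 + 2 * (y ^ 2 + 1)) := by
    funext t; ring_nf
  have f2 : (fun t : ℝ => (p1 ^ 2 + p2 ^ 2) / (2 * (4 * x ^ 2 + t ^ 2 + 1)))
      = fun t : ℝ => (0 * t ^ 2 + (p1 ^ 2 + p2 ^ 2)) / (2 * t ^ 2 + 2 * (4 * x ^ 2 + 1)) := by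
    funext t; ring_nf
  have f3 : (fun t : ℝ => (t ^ 2 + p2 ^ 2) / (2 * (4 * x ^ 2 + y ^ 2 + 1)))
      = fun t : ℝ => (1 * t ^ 2 + p2 ^ 2) / (0 * t ^ 2 + 2 * (4 * x ^ 2 + y ^ 2 + 1)) := by
    funext t; ring_nf
  have f4 : (fun t : ℝ => (p1 ^ 2 + t ^ 2) / (2 * (4 * x ^ 2 + y ^ 2 + 1)))
      = fun t : ℝ => (1 * t ^ 2 + p1 ^ 2) / (0 * t ^ 2 + 2 * (4 * x ^ 2 + y ^ 2 + 1)) := by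
    funext t; ring_nf
  rw [e1, e2, e3, e4, f1, f2, f3, f4,
    dq _ _ _ _ _ hD, dq _ _ _ _ _ hDy, dq _ _ _ _ _ (hC p1), dq _ _ _ _ _ (hC p2),
    dq _ _ _ _ _ hGx, dq _ _ _ _ _ hGy, dq _ _ _ _ _ (hC2 p1), dq _ _ _ _ _ (hC2 p2)]
  have h0 : (4 : ℝ) * x ^ 2 + y ^ 2 + 1 ≠ 0 := by positivity
  field_simp
  ring
end

section
/- For the metric g = (4x²+y²+1)(dx²+dy²) on ℝ², the scalar curvature R and its Laplacian Δ_g R are functionally independent on a nonempty open set; in particular dR ∧ d(Δ_g R) does not vanish identically. -/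
noncomputable def pdx (f : ℝ → ℝ → ℝ) (x y : ℝ) : ℝ := deriv (fun t => f t y) x
noncomputable def pdy (f : ℝ → ℝ → ℝ) (x y : ℝ) : ℝ := deriv (fun t => f x t) y

/-- Conformal factor λ = 4x² + y² + 1. -/
noncomputable def lam (x y : ℝ) : ℝ := 4 * x ^ 2 + y ^ 2 + 1

/-- Scalar curvature R = 2K = −(1/λ)Δ(log λ) of the metric λ(dx²+dy²). -/
noncomputable def scalR (x y : ℝ) : ℝ :=
  -(1 / lam x y) *
    (pdx (pdx (fun a b => Real.log (lam a b))) x y +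
     pdy (pdy (fun a b => Real.log (lam a b))) x y)

/-- Laplace–Beltrami of R: Δ_g R = (1/λ)(R_xx + R_yy). -/
noncomputable def lapR (x y : ℝ) : ℝ :=
  (1 / lam x y) * (pdx (pdx scalR) x y + pdy (pdy scalR) x y)

lemma lam_pos (x y : ℝ) : 0 < lam x y := by unfold lam; positivity

lemma lam_ne (x y : ℝ) : lam x y ≠ 0 := (lam_pos x y).ne'

lemma hasDerivAt_lamx (y x : ℝ) : HasDerivAt (fun t => lam t y) (8 * x) x := by
  unfold lam
  have h := (((hasDerivAt_pow 2 x).const_mul 4).add_const (y ^ 2)).add_const 1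
  exact h.congr_deriv (by push_cast; ring)

lemma hasDerivAt_lamy (x y : ℝ) : HasDerivAt (fun t => lam x t) (2 * y) y := by
  unfold lam
  have h := ((hasDerivAt_pow 2 y).const_add (4 * x ^ 2)).add_const 1
  exact h.congr_deriv (by push_cast; ring)

/-- generic polynomial derivative up to degree 6 -/
lemma hasDerivAt_poly (a0 a1 a2 a3 a4 a5 a6 x : ℝ) :
    HasDerivAt (fun t : ℝ => a0 + a1 * t + a2 * t ^ 2 + a3 * t ^ 3 + a4 * t ^ 4 + a5 * t ^ 5 + a6 * t ^ 6)
      (a1 + 2 * a2 * x + 3 * a3 * x ^ 2 + 4 * a4 * x ^ 3 + 5 * a5 * x ^ 4 + 6 * a6 * x ^ 5) x := by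
  have h := (((((((hasDerivAt_id' (x := x)).const_mul a1).const_add a0).add
      ((hasDerivAt_pow 2 x).const_mul a2)).add ((hasDerivAt_pow 3 x).const_mul a3)).add
      ((hasDerivAt_pow 4 x).const_mul a4)).add ((hasDerivAt_pow 5 x).const_mul a5)).add
      ((hasDerivAt_pow 6 x).const_mul a6)
  exact h.congr_deriv (by push_cast; ring)

lemma pdx_log (x y : ℝ) :
    pdx (fun a b => Real.log (lam a b)) x y = (8 * x) / lam x y := by
  unfold pdx
  exact ((hasDerivAt_lamx y x).log (lam_ne x y)).deriv

lemma pdy_log (x y : ℝ) :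
    pdy (fun a b => Real.log (lam a b)) x y = (2 * y) / lam x y := by
  unfold pdy
  exact ((hasDerivAt_lamy x y).log (lam_ne x y)).deriv

lemma pdxx_log (x y : ℝ) :
    pdx (pdx (fun a b => Real.log (lam a b))) x y
      = (8 * lam x y - 64 * x ^ 2) / (lam x y) ^ 2 := by
  unfold pdx
  have hfun : (fun t => deriv (fun s => Real.log (lam s y)) t)
      = fun t => (8 * t) / lam t y := by
    funext t; exact pdx_log t y
  rw [show (fun t => deriv (fun t_1 => Real.log (lam t_1 y)) t) = fun t => (8 * t) / lam t y from hfun]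
  have hN : HasDerivAt (fun t : ℝ => 8 * t) 8 x := by
    simpa using (hasDerivAt_id x).const_mul (8 : ℝ)
  rw [(hN.fun_div (hasDerivAt_lamx y x) (lam_ne x y)).deriv]
  ring

lemma pdyy_log (x y : ℝ) :
    pdy (pdy (fun a b => Real.log (lam a b))) x y
      = (2 * lam x y - 4 * y ^ 2) / (lam x y) ^ 2 := by
  unfold pdy
  have hfun : (fun t => deriv (fun s => Real.log (lam x s)) t)
      = fun t => (2 * t) / lam x t := by
    funext t; exact pdy_log x t
  rw [show (fun t => deriv (fun t_1 => Real.log (lam x t_1)) t) = fun t => (2 * t) / lam x t from hfun]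
  have hN : HasDerivAt (fun t : ℝ => 2 * t) 2 y := by
    simpa using (hasDerivAt_id y).const_mul (2 : ℝ)
  rw [(hN.fun_div (hasDerivAt_lamy x y) (lam_ne x y)).deriv]
  ring

lemma scalR_eq (x y : ℝ) :
    scalR x y = (24 * x ^ 2 - 6 * y ^ 2 - 10) / (lam x y) ^ 3 := by
  unfold scalR
  rw [pdxx_log, pdyy_log]
  have h := lam_ne x y
  field_simp
  unfold lam
  ring

lemma pdx_scalR (x y : ℝ) :
    pdx scalR x y = (-384 * x ^ 3 + 192 * x * y ^ 2 + 288 * x) / (lam x y) ^ 4 := by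
  unfold pdx
  have hfun : (fun t => scalR t y)
      = fun t => ((-6 * y ^ 2 - 10) + 0 * t + 24 * t ^ 2 + 0 * t ^ 3 + 0 * t ^ 4 + 0 * t ^ 5 + 0 * t ^ 6)
        / (lam t y) ^ 3 := by
    funext t; rw [scalR_eq]; ring_nf
  rw [hfun]
  have hN := hasDerivAt_poly (-6 * y ^ 2 - 10) 0 24 0 0 0 0 x
  have hD := (hasDerivAt_lamx y x).fun_pow 3
  rw [(hN.fun_div hD (pow_ne_zero 3 (lam_ne x y))).deriv]
  have h := lam_ne x y
  field_simp
  unfold lam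
  ring

lemma pdy_scalR (x y : ℝ) :
    pdy scalR x y = (-192 * x ^ 2 * y + 24 * y ^ 3 + 48 * y) / (lam x y) ^ 4 := by
  unfold pdy
  have hfun : (fun t => scalR x t)
      = fun t => ((24 * x ^ 2 - 10) + 0 * t + (-6) * t ^ 2 + 0 * t ^ 3 + 0 * t ^ 4 + 0 * t ^ 5 + 0 * t ^ 6)
        / (lam x t) ^ 3 := by
    funext t; rw [scalR_eq]; ring_nf
  rw [hfun]
  have hN := hasDerivAt_poly (24 * x ^ 2 - 10) 0 (-6) 0 0 0 0 y
  have hD := (hasDerivAt_lamy x y).fun_pow 3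
  rw [(hN.fun_div hD (pow_ne_zero 3 (lam_ne x y))).deriv]
  have h := lam_ne x y
  field_simp
  unfold lam
  ring

lemma pdxx_scalR (x y : ℝ) :
    pdx (pdx scalR) x y
      = (7680 * x ^ 4 - 6528 * x ^ 2 * y ^ 2 - 9216 * x ^ 2 + 192 * y ^ 4 + 480 * y ^ 2 + 288)
        / (lam x y) ^ 5 := by
  unfold pdx
  have hfun : (fun t => pdx scalR t y)
      = fun t => (0 + (192 * y ^ 2 + 288) * t + 0 * t ^ 2 + (-384) * t ^ 3 + 0 * t ^ 4 + 0 * t ^ 5 + 0 * t ^ 6)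
        / (lam t y) ^ 4 := by
    funext t; rw [pdx_scalR]; ring_nf
  rw [show (fun t => deriv (fun t_1 => scalR t_1 y) t) = _ from hfun]
  have hN := hasDerivAt_poly 0 (192 * y ^ 2 + 288) 0 (-384) 0 0 0 x
  have hD := (hasDerivAt_lamx y x).fun_pow 4
  rw [(hN.fun_div hD (pow_ne_zero 4 (lam_ne x y))).deriv]
  have h := lam_ne x y
  field_simp
  unfold lam
  ring

lemma pdyy_scalR (x y : ℝ) :
    pdy (pdy scalR) x y
      = (-768 * x ^ 4 + 1632 * x ^ 2 * y ^ 2 - 120 * y ^ 4 - 264 * y ^ 2 + 48)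
        / (lam x y) ^ 5 := by
  unfold pdy
  have hfun : (fun t => pdy scalR x t)
      = fun t => (0 + (-192 * x ^ 2 + 48) * t + 0 * t ^ 2 + 24 * t ^ 3 + 0 * t ^ 4 + 0 * t ^ 5 + 0 * t ^ 6)
        / (lam x t) ^ 4 := by
    funext t; rw [pdy_scalR]; ring_nf
  rw [show (fun t => deriv (fun t_1 => scalR x t_1) t) = _ from hfun]
  have hN := hasDerivAt_poly 0 (-192 * x ^ 2 + 48) 0 24 0 0 0 y
  have hD := (hasDerivAt_lamy x y).fun_pow 4
  rw [(hN.fun_div hD (pow_ne_zero 4 (lam_ne x y))).deriv]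
  have h := lam_ne x y
  field_simp
  unfold lam
  ring

lemma lapR_eq (x y : ℝ) :
    lapR x y
      = (6912 * x ^ 4 - 4896 * x ^ 2 * y ^ 2 - 9216 * x ^ 2 + 72 * y ^ 4 + 216 * y ^ 2 + 336)
        / (lam x y) ^ 6 := by
  unfold lapR
  rw [pdxx_scalR, pdyy_scalR]
  have h := lam_ne x y
  field_simp
  ring

lemma pdx_lapR (x y : ℝ) :
    pdx lapR x y
      = (-221184 * x ^ 5 + 223488 * x ^ 3 * y ^ 2 + 396288 * x ^ 3 - 13248 * x * y ^ 4
          - 38592 * x * y ^ 2 - 34560 * x) / (lam x y) ^ 7 := by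
  unfold pdx
  have hfun : (fun t => lapR t y)
      = fun t => ((72 * y ^ 4 + 216 * y ^ 2 + 336) + 0 * t + (-4896 * y ^ 2 - 9216) * t ^ 2
          + 0 * t ^ 3 + 6912 * t ^ 4 + 0 * t ^ 5 + 0 * t ^ 6) / (lam t y) ^ 6 := by
    funext t; rw [lapR_eq]; ring_nf
  rw [hfun]
  have hN := hasDerivAt_poly (72 * y ^ 4 + 216 * y ^ 2 + 336) 0 (-4896 * y ^ 2 - 9216) 0 6912 0 0 x
  have hD := (hasDerivAt_lamx y x).fun_pow 6
  rw [(hN.fun_div hD (pow_ne_zero 6 (lam_ne x y))).deriv]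
  have h := lam_ne x y
  field_simp
  unfold lam
  ring

lemma pdy_lapR (x y : ℝ) :
    pdy lapR x y
      = (-122112 * x ^ 4 * y + 50112 * x ^ 2 * y ^ 3 + 102528 * x ^ 2 * y - 576 * y ^ 5
          - 1872 * y ^ 3 - 3600 * y) / (lam x y) ^ 7 := by
  unfold pdy
  have hfun : (fun t => lapR x t)
      = fun t => ((6912 * x ^ 4 - 9216 * x ^ 2 + 336) + 0 * t + (-4896 * x ^ 2 + 216) * t ^ 2
          + 0 * t ^ 3 + 72 * t ^ 4 + 0 * t ^ 5 + 0 * t ^ 6) / (lam x t) ^ 6 := by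
    funext t; rw [lapR_eq]; ring_nf
  rw [hfun]
  have hN := hasDerivAt_poly (6912 * x ^ 4 - 9216 * x ^ 2 + 336) 0 (-4896 * x ^ 2 + 216) 0 72 0 0 y
  have hD := (hasDerivAt_lamy x y).fun_pow 6
  rw [(hN.fun_div hD (pow_ne_zero 6 (lam_ne x y))).deriv]
  have h := lam_ne x y
  field_simp
  unfold lam
  ring

/-- Closed form of the wedge dR ∧ d(Δ_g R). -/
noncomputable def wedgeF (p : ℝ × ℝ) : ℝ :=
  (276480 * p.1 ^ 3 * p.2 + 207360 * p.1 * p.2 ^ 3 + 622080 * p.1 * p.2) / (lam p.1 p.2) ^ 9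

lemma wedge_eq (x y : ℝ) :
    pdx scalR x y * pdy lapR x y - pdy scalR x y * pdx lapR x y = wedgeF (x, y) := by
  rw [pdx_scalR, pdy_scalR, pdx_lapR, pdy_lapR]
  unfold wedgeF
  have h := lam_ne x y
  field_simp
  unfold lam
  ring

lemma wedgeF_cont : Continuous wedgeF := by
  unfold wedgeF lam
  apply Continuous.div
  · fun_prop
  · fun_prop
  · intro p
    have : (0:ℝ) < 4 * p.1 ^ 2 + p.2 ^ 2 + 1 := by positivity
    positivity

lemma wedgeF_one_one : wedgeF (1, 1) ≠ 0 := by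
  unfold wedgeF lam
  norm_num

/-- For g = (4x²+y²+1)(dx²+dy²), the scalar curvature R and Δ_g R are functionally
independent on a nonempty open set; in particular dR ∧ d(Δ_g R) does not vanish identically. -/
theorem stmt_5 :
    (∃ s : Set (ℝ × ℝ), IsOpen s ∧ s.Nonempty ∧
      ∀ p ∈ s, pdx scalR p.1 p.2 * pdy lapR p.1 p.2
             - pdy scalR p.1 p.2 * pdx lapR p.1 p.2 ≠ 0) ∧
    ∃ x y : ℝ, pdx scalR x y * pdy lapR x y - pdy scalR x y * pdx lapR x y ≠ 0 := by
  constructor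
  · refine ⟨wedgeF ⁻¹' {0}ᶜ, (isOpen_compl_singleton).preimage wedgeF_cont,
      ⟨(1, 1), wedgeF_one_one⟩, ?_⟩
    intro p hp
    have : wedgeF p ≠ 0 := hp
    rw [show p = (p.1, p.2) from rfl] at this
    rw [wedge_eq p.1 p.2]
    exact this
  · exact ⟨1, 1, by rw [wedge_eq]; exact wedgeF_one_one⟩
end
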